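/- arXiv:2310.14862 — 3 statements merged into one kernel-verified Lean document; each statement's English description precedes it below -/
import Mathlib

section
/- The sequence (λ_k)^k is strictly decreasing in k for k ≥ 3; that is, for all integers k ≥ 3, λ_k^k > λ_{k+1}^{k+1}. -/
/-- The sequence `(λ_k)^k` is strictly decreasing for `k ≥ 3`. -/
theorem lambda_pow_strict_anti (k : ℕ) (hk : 3 ≤ k) (a b : ℝ)
    (ha1 : 1 < a) (ha2 : a ^ k = 2 * a + 1)
    (hb1 : 1 < b) (hb2 : b ^ (k + 1) = 2 * b + 1) :
    a ^ k > b ^ (k + 1) := by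
  have hb0 : (0:ℝ) < b := by linarith
  have hab : b < a := by
    by_contra h
    push_neg at h
    have h1 : a ^ k ≤ b ^ k := pow_le_pow_left₀ (by linarith) h k
    have h2 : b ^ k * b = 2 * b + 1 := by rw [← pow_succ]; exact hb2
    nlinarith
  linarith
end

section
/- Let n ≥ 6 be a composite integer and let p be its smallest prime factor. Then the minimum of the set {(1/d)·log(λ_{n/d}) : d is a divisor of n with d ≠ 1 and d ≠ n} is attained at d = p. -/
private lemma pow_gap (k : ℕ) : ∀ x y : ℝ, 1 ≤ x → x ≤ y → x ^ k + k * (y - x) ≤ y ^ k := by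
  induction k with
  | zero => intro x y hx hxy; simp
  | succ k ih =>
    intro x y hx hxy
    have h := ih x y hx hxy
    have hxk : (1:ℝ) ≤ x ^ k := one_le_pow₀ hx
    have hy : (1:ℝ) ≤ y := hx.trans hxy
    have hmul : y * (x ^ k + k * (y - x)) ≤ y * y ^ k :=
      mul_le_mul_of_nonneg_left h (by linarith)
    rw [pow_succ, pow_succ]
    push_cast
    nlinarith [hmul, mul_nonneg (sub_nonneg.mpr hxy) (sub_nonneg.mpr hxk),
      mul_nonneg (mul_nonneg (Nat.cast_nonneg (α := ℝ) k) (sub_nonneg.mpr hxy)) (sub_nonneg.mpr hy)]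

private lemma L_anti (L : ℕ → ℝ)
    (hL : ∀ k, 3 ≤ k → 1 < L k ∧ (L k) ^ k = 2 * L k + 1)
    {a b : ℕ} (hb : 3 ≤ b) (hba : b ≤ a) : L a ≤ L b := by
  have ha : 3 ≤ a := hb.trans hba
  obtain ⟨ha1, ha2⟩ := hL a ha
  obtain ⟨hb1, hb2⟩ := hL b hb
  by_contra hcon
  push_neg at hcon
  have h1 : L b ^ b + b * (L a - L b) ≤ L a ^ b :=
    pow_gap b (L b) (L a) hb1.le hcon.le
  have h2 : L a ^ b ≤ L a ^ a := pow_le_pow_right₀ ha1.le hba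
  have hb3 : (3:ℝ) ≤ (b:ℝ) := by exact_mod_cast hb
  nlinarith [hcon]

/-- For a composite `n ≥ 6` with smallest prime factor `p`, the minimum of the set
`{(1/d)·log(λ_{n/d}) : d ∣ n, d ≠ 1, d ≠ n}` is attained at `d = p`. -/
theorem min_at_smallest_prime (L : ℕ → ℝ)
    (hL : ∀ k, 3 ≤ k → 1 < L k ∧ (L k) ^ k = 2 * L k + 1)
    (n : ℕ) (hn : 6 ≤ n) (hcomp : ¬ Nat.Prime n) (p : ℕ) (hp : p = n.minFac) :
    (p ∣ n ∧ p ≠ 1 ∧ p ≠ n) ∧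
      ∀ d : ℕ, d ∣ n → d ≠ 1 → d ≠ n → 3 ≤ n / d →
        (1 / (p : ℝ)) * Real.log (L (n / p)) ≤ (1 / (d : ℝ)) * Real.log (L (n / d)) := by
  have hn1 : n ≠ 1 := by omega
  have hpp : Nat.Prime p := hp ▸ Nat.minFac_prime hn1
  have hpdvd : p ∣ n := hp ▸ Nat.minFac_dvd n
  have hpn : p ≠ n := fun h => hcomp (h ▸ hpp)
  refine ⟨⟨hpdvd, hpp.ne_one, hpn⟩, ?_⟩
  intro d hd hd1 hdn hnd3
  have hn0 : 0 < n := by omega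
  have hd0 : 0 < d := Nat.pos_of_dvd_of_pos hd hn0
  have hpd : p ≤ d := hp ▸ Nat.minFac_le_of_dvd (by omega) hd
  set a := n / p with hadef
  set b := n / d with hbdef
  have hba : b ≤ a := Nat.div_le_div_left hpd (hpp.pos)
  have ha3 : 3 ≤ a := hnd3.trans hba
  have hpa : p * a = n := Nat.mul_div_cancel' hpdvd
  have hdb : d * b = n := Nat.mul_div_cancel' hd
  obtain ⟨ha1, ha2⟩ := hL a ha3
  obtain ⟨hb1, hb2⟩ := hL b hnd3
  have hLab : L a ≤ L b := L_anti L hL hnd3 hba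
  -- key : a * log (L a) ≤ b * log (L b)
  have key : (a:ℝ) * Real.log (L a) ≤ (b:ℝ) * Real.log (L b) := by
    rw [← Real.log_pow, ← Real.log_pow, ha2, hb2]
    apply Real.log_le_log (by linarith) (by linarith)
  have hpR : (0:ℝ) < p := by exact_mod_cast hpp.pos
  have hdR : (0:ℝ) < d := by exact_mod_cast hd0
  have hnR : (0:ℝ) < n := by exact_mod_cast hn0
  have hpaR : (p:ℝ) * a = n := by exact_mod_cast hpa
  have hdbR : (d:ℝ) * b = n := by exact_mod_cast hdb
  have haR : (0:ℝ) < a := by positivity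
  have hbR : (0:ℝ) < b := by exact_mod_cast (by omega : 0 < b)
  calc (1 / (p:ℝ)) * Real.log (L a)
      = ((a:ℝ) * Real.log (L a)) / n := by
        rw [← hpaR]; field_simp
    _ ≤ ((b:ℝ) * Real.log (L b)) / n := by
        gcongr
    _ = (1 / (d:ℝ)) * Real.log (L b) := by
        rw [← hdbR]; field_simp
end

section
/- For every integer n ≥ 4, λ_n^p < λ_{n/p} whenever p ≥ 2 divides n and n/p ≥ 3; equivalently, log(λ_n) < log(λ_{n/p})/p. -/
/-- The map `x ↦ x^q - 2x` is strictly monotone on `[1, ∞)` for `q ≥ 3`. -/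
lemma aux_strictMonoOn (q : ℕ) (hq : 3 ≤ q) :
    StrictMonoOn (fun x : ℝ => x ^ q - 2 * x) (Set.Ici 1) := by
  intro x hx y hy hxy
  simp only [Set.mem_Ici] at hx hy
  have hsum : (2 : ℝ) * (y - x) < y ^ q - x ^ q := by
    have hfac : y ^ q - x ^ q = (y - x) * ∑ i ∈ Finset.range q, y ^ i * x ^ (q - 1 - i) := by
      rw [← geom_sum₂_mul, mul_comm]
    rw [hfac]
    have hyx : 0 < y - x := by linarith
    have hbound : (q : ℝ) ≤ ∑ i ∈ Finset.range q, y ^ i * x ^ (q - 1 - i) := by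
      calc (q : ℝ) = ∑ _i ∈ Finset.range q, (1 : ℝ) := by simp
        _ ≤ _ := by
          apply Finset.sum_le_sum
          intro i _
          have h1 : (1 : ℝ) ≤ y ^ i := one_le_pow₀ (by linarith)
          have h2 : (1 : ℝ) ≤ x ^ (q - 1 - i) := one_le_pow₀ hx
          nlinarith
    have hq3 : (3 : ℝ) ≤ (q : ℝ) := by exact_mod_cast hq
    nlinarith
  simp only []; linarith

/-- For `n ≥ 4`, if `p ≥ 2` divides `n` and `n/p ≥ 3`, then `λ_n^p < λ_{n/p}`;
equivalently `log λ_n < log(λ_{n/p})/p`. -/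
theorem lambda_pow_lt (n p : ℕ) (hn : 4 ≤ n) (hp : 2 ≤ p) (hdvd : p ∣ n)
    (hq : 3 ≤ n / p) (a b : ℝ)
    (ha1 : 1 < a) (ha2 : a ^ n = 2 * a + 1)
    (hb1 : 1 < b) (hb2 : b ^ (n / p) = 2 * b + 1) :
    a ^ p < b ∧ Real.log a < Real.log b / p := by
  set q := n / p with hqdef
  have hn_eq : n = p * q := (Nat.mul_div_cancel' hdvd).symm
  have ha0 : (0 : ℝ) < a := by linarith
  have hc1 : 1 < a ^ p := one_lt_pow₀ ha1 (by omega)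
  have hac : a < a ^ p := by
    calc a = a ^ 1 := (pow_one a).symm
      _ < a ^ p := pow_lt_pow_right₀ ha1 (by omega)
  have hcq : (a ^ p) ^ q = 2 * a + 1 := by
    rw [← pow_mul, ← hn_eq, ha2]
  have hmono := aux_strictMonoOn q hq
  have hfcb : (a ^ p) ^ q - 2 * (a ^ p) < b ^ q - 2 * b := by
    rw [hcq, hb2]; linarith
  have hapb : a ^ p < b := by
    by_contra h
    push_neg at h
    rcases eq_or_lt_of_le h with h' | h'
    · rw [h'] at hfcb; linarith
    · have := hmono (Set.mem_Ici.mpr hb1.le) (Set.mem_Ici.mpr hc1.le) h'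
      simp only at this; linarith
  refine ⟨hapb, ?_⟩
  have hlog : Real.log (a ^ p) < Real.log b := Real.log_lt_log (by positivity) hapb
  rw [Real.log_pow] at hlog
  have hp0 : (0 : ℝ) < p := by exact_mod_cast (by omega : 0 < p)
  rw [lt_div_iff₀ hp0]
  linarith [hlog]
end
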